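/- Let G = (V,E) be a finite simple undirected graph, s, t ∈ V distinct, C a fractional (s,t)-vertex cut of G, d(v) = dist_{G,C}(s,v), and ε > 0. Suppose d̃ : V → ℝ≥0 satisfies d(v) ≤ d̃(v) ≤ (1+ε)·d(v) for every vertex v reachable from s. Then for every θ ∈ (0, 1/(1+ε)), with L̃_θ = {v : d̃(v) < θ}, S̃_θ = {v : θ ≤ d̃(v) ≤ (1+ε)(θ + C(v))}, and R̃_θ = {v : d̃(v) > (1+ε)(θ + C(v))} ∪ {v : v unreachable from s}, the triple (L̃_θ, S̃_θ, R̃_θ) is an (s,t)-vertex cut of G; in particular S̃_θ is an (s,t)-separator. -/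

import Mathlib

open scoped ENNReal

/-- Vertex-length distance: the infimum, over all `(s,v)`-paths `p` of `G`, of the sum of the
vertex lengths `C` along `p` (`∞` if `v` is unreachable from `s`). -/
noncomputable def vdist {V : Type*} (G : SimpleGraph V) (C : V → ℝ) (s v : V) : ℝ≥0∞ :=
  ⨅ p : {p : G.Walk s v // p.IsPath}, ENNReal.ofReal ((p.1.support.map C).sum)

section aux
variable {V : Type*} {G : SimpleGraph V} {C : V → ℝ}

lemma walk_sum_nonneg (hC : ∀ v, 0 ≤ C v) {s v : V} (p : G.Walk s v) :
    0 ≤ (p.support.map C).sum := by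
  apply List.sum_nonneg
  intro x hx
  obtain ⟨y, -, rfl⟩ := List.mem_map.1 hx
  exact hC y

lemma vdist_le_walk (hC : ∀ v, 0 ≤ C v) {s v : V} (q : G.Walk s v) :
    vdist G C s v ≤ ENNReal.ofReal ((q.support.map C).sum) := by
  classical
  refine le_trans (iInf_le _ ⟨q.bypass, q.bypass_isPath⟩) ?_
  apply ENNReal.ofReal_le_ofReal
  obtain ⟨m, hm, hms⟩ :=
    (q.bypass_isPath.support_nodup).subperm q.support_bypass_subset
  calc (q.bypass.support.map C).sum = (m.map C).sum := ((hm.map C).sum_eq).symm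
    _ ≤ (q.support.map C).sum := by
        apply List.Sublist.sum_le_sum (hms.map C)
        intro a ha
        obtain ⟨y, -, rfl⟩ := List.mem_map.1 ha
        exact hC y

lemma vdist_adj (hC : ∀ v, 0 ≤ C v) {s u v : V} (h : G.Adj u v) :
    vdist G C s v ≤ vdist G C s u + ENNReal.ofReal (C v) := by
  conv_rhs => rw [vdist, ENNReal.iInf_add]
  refine le_iInf fun p => ?_
  have := vdist_le_walk hC (p.1.concat h)
  refine this.trans ?_
  rw [SimpleGraph.Walk.support_concat, List.map_append,
    List.sum_append]
  simp only [List.map_cons, List.map_nil, List.sum_cons, List.sum_nil, add_zero]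
  exact ENNReal.ofReal_add_le

end aux


/-- Let `C` be a fractional `(s,t)`-vertex cut of `G`,
`d v = dist_{G,C}(s,v)`, `ε > 0`, and `d̃` a `(1+ε)`-approximation of `d` on the vertices
reachable from `s`. Then for every `θ ∈ (0, 1/(1+ε))`, the triple
`(L̃_θ, S̃_θ, R̃_θ)` with `L̃_θ = {d̃ < θ}`, `S̃_θ = {θ ≤ d̃ ≤ (1+ε)(θ+C)}`, and
`R̃_θ = {d̃ > (1+ε)(θ+C)} ∪ {unreachable}` is an `(s,t)`-vertex cut of `G`; in particular
`S̃_θ` is an `(s,t)`-separator. -/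
theorem stmt_3 {V : Type*} [Fintype V] (G : SimpleGraph V) (s t : V) (hst : s ≠ t)
    (C : V → ℝ) (hC : ∀ v, 0 ≤ C v) (hCs : C s = 0) (hCt : C t = 0)
    (hcut : ∀ p : G.Walk s t, p.IsPath → 1 ≤ (p.support.map C).sum)
    (ε : ℝ) (hε : 0 < ε)
    (dt : V → ℝ) (hdt0 : ∀ v, 0 ≤ dt v)
    (happrox : ∀ v, G.Reachable s v →
      vdist G C s v ≤ ENNReal.ofReal (dt v) ∧
      ENNReal.ofReal (dt v) ≤ ENNReal.ofReal (1 + ε) * vdist G C s v)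
    (θ : ℝ) (hθ0 : 0 < θ) (hθ1 : θ < 1 / (1 + ε)) :
    let L : Set V := {v | G.Reachable s v ∧ dt v < θ}
    let S : Set V := {v | G.Reachable s v ∧ θ ≤ dt v ∧ dt v ≤ (1 + ε) * (θ + C v)}
    let R : Set V := {v | G.Reachable s v ∧ (1 + ε) * (θ + C v) < dt v} ∪
      {v | ¬ G.Reachable s v}
    (L ∪ S ∪ R = Set.univ) ∧ Disjoint L S ∧ Disjoint L R ∧ Disjoint S R ∧
      s ∈ L ∧ t ∈ R ∧ (∀ u ∈ L, ∀ v ∈ R, ¬ G.Adj u v) := by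
  intro L S R
  have h1ε : (0:ℝ) < 1 + ε := by linarith
  -- vdist s s = 0
  have hvss : vdist G C s s = 0 := by
    have h := vdist_le_walk hC (SimpleGraph.Walk.nil : G.Walk s s)
    simp [hCs] at h
    exact h
  -- dt s = 0
  have hdts : dt s = 0 := by
    have h := (happrox s (SimpleGraph.Reachable.refl s)).2
    rw [hvss, mul_zero, nonpos_iff_eq_zero, ENNReal.ofReal_eq_zero] at h
    exact le_antisymm h (hdt0 s)
  -- vdist s t ≥ 1
  have hvst : 1 ≤ vdist G C s t := by
    refine le_iInf fun p => ?_
    rw [show (1:ℝ≥0∞) = ENNReal.ofReal 1 by simp]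
    exact ENNReal.ofReal_le_ofReal (hcut p.1 p.2)
  constructor
  · -- union
    ext v
    simp only [Set.mem_union, Set.mem_setOf_eq, Set.mem_univ, iff_true, L, S, R]
    by_cases hr : G.Reachable s v
    · rcases lt_or_ge (dt v) θ with h | h
      · exact Or.inl (Or.inl ⟨hr, h⟩)
      rcases le_or_gt (dt v) ((1 + ε) * (θ + C v)) with h2 | h2
      · exact Or.inl (Or.inr ⟨hr, h, h2⟩)
      · exact Or.inr (Or.inl ⟨hr, h2⟩)
    · exact Or.inr (Or.inr hr)
  refine ⟨?_, ?_, ?_, ?_, ?_, ?_⟩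
  · rw [Set.disjoint_left]
    rintro v ⟨-, h1⟩ ⟨-, h2, -⟩
    exact absurd h1 (not_lt.2 h2)
  · rw [Set.disjoint_left]
    rintro v ⟨hr, h1⟩ (⟨-, h2⟩ | h2)
    · have : θ ≤ (1 + ε) * (θ + C v) := by nlinarith [hC v]
      linarith
    · exact h2 hr
  · rw [Set.disjoint_left]
    rintro v ⟨hr, -, h1⟩ (⟨-, h2⟩ | h2)
    · linarith
    · exact h2 hr
  · exact ⟨SimpleGraph.Reachable.refl s, by rw [hdts]; exact hθ0⟩
  · by_cases hr : G.Reachable s t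
    · left
      refine ⟨hr, ?_⟩
      have h1 : 1 ≤ ENNReal.ofReal (dt t) := le_trans hvst (happrox t hr).1
      have h2 : (1:ℝ) ≤ dt t := by
        rw [← ENNReal.one_le_ofReal]; exact h1
      rw [hCt, add_zero]
      rw [lt_div_iff₀ h1ε] at hθ1
      linarith
    · exact Or.inr hr
  · rintro u ⟨hru, hu⟩ v hv hadj
    have hrv : G.Reachable s v := hru.trans hadj.reachable
    rcases hv with ⟨-, hv⟩ | hv
    · -- v reachable with large dt v: contradiction
      have h1 : ENNReal.ofReal (dt v) ≤ ENNReal.ofReal (1 + ε) * vdist G C s v :=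
        (happrox v hrv).2
      have h2 : vdist G C s v ≤ ENNReal.ofReal (dt u) + ENNReal.ofReal (C v) :=
        le_trans (vdist_adj hC hadj) (by
          gcongr
          exact (happrox u hru).1)
      have h3 : ENNReal.ofReal (dt v) ≤
          ENNReal.ofReal ((1 + ε) * (dt u + C v)) := by
        calc ENNReal.ofReal (dt v) ≤ ENNReal.ofReal (1 + ε) *
              (ENNReal.ofReal (dt u) + ENNReal.ofReal (C v)) := le_trans h1 (by gcongr)
          _ = ENNReal.ofReal ((1 + ε) * (dt u + C v)) := by
              rw [← ENNReal.ofReal_add (hdt0 u) (hC v), ← ENNReal.ofReal_mul h1ε.le]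
      have h4 : dt v ≤ (1 + ε) * (dt u + C v) := by
        rwa [ENNReal.ofReal_le_ofReal_iff (by nlinarith [hdt0 u, hC v])] at h3
      nlinarith [hC v]
    · exact hv hrv
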